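/- arXiv:1412.3523 — 2 statements merged into one kernel-verified Lean document; each statement's English description precedes it below -/
import Mathlib

section
/- Let k be a finite field, ψ a nontrivial additive character of k, and n ≥ 1. Define K_{n,a}(ψ) = Σ_{ζ_1⋯ζ_n = a, ζ_i ∈ k^×} ψ(Σ ζ_i). Then for any a' ∈ k^× with a' ≠ 1, there exists a ∈ k^× such that K_{n,a}(ψ) ≠ K_{n, a·a'}(ψ). -/
open Finset

/-- The generalized Kloosterman sum `K_{n,a}(ψ)`, the sum of `ψ(ζ₁ + ⋯ + ζₙ)`
over `n`-tuples `(ζ₁, …, ζₙ)` of elements of `kˣ` with product `a`. -/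
noncomputable def kloosterman {k : Type*} [Field k] [Fintype k] [DecidableEq k]
    (ψ : k → ℂ) (n : ℕ) (a : kˣ) : ℂ :=
  ∑ ζ ∈ Finset.univ.filter (fun ζ : Fin n → kˣ => (∏ i, ((ζ i : k))) = (a : k)),
    ψ (∑ i, ((ζ i : k)))

private lemma addChar_map_sum {k : Type*} [Field k] (ψ : AddChar k ℂ)
    {ι : Type*} (s : Finset ι) (f : ι → k) :
    ψ (∑ i ∈ s, f i) = ∏ i ∈ s, ψ (f i) := by
  induction s using Finset.cons_induction with
  | empty => simp
  | cons a s ha ih => simp [Finset.sum_cons, Finset.prod_cons, ψ.map_add_eq_mul, ih]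

set_option maxHeartbeats 1000000 in
/-- The key identity `∑ a, χ(a) K_{n,a}(ψ) = G(χ,ψ)^n` for a nontrivial `χ`. -/
private lemma sum_mulChar_kloosterman {k : Type*} [Field k] [Fintype k] [DecidableEq k]
    (ψ : AddChar k ℂ) (χ : MulChar k ℂ) (n : ℕ) :
    ∑ a : kˣ, χ (a : k) * kloosterman (⇑ψ) n a
      = (∑ u : kˣ, χ (u : k) * ψ (u : k)) ^ n := by
  have h1 : ∀ a : kˣ,
      χ (a : k) * kloosterman (⇑ψ) n a
        = ∑ ζ ∈ Finset.univ.filter (fun ζ : Fin n → kˣ => (∏ i, ζ i) = a),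
            ∏ i, (χ ((ζ i : k)) * ψ ((ζ i : k))) := by
    intro a
    rw [kloosterman, Finset.mul_sum]
    have hfilt : (Finset.univ.filter (fun ζ : Fin n → kˣ => (∏ i, ((ζ i : k))) = (a : k)))
        = Finset.univ.filter (fun ζ : Fin n → kˣ => (∏ i, ζ i) = a) := by
      apply Finset.filter_congr
      intro ζ _
      simp [Units.ext_iff]
    rw [hfilt]
    apply Finset.sum_congr rfl
    intro ζ hζ
    rw [Finset.mem_filter] at hζ
    rw [Finset.prod_mul_distrib, ← map_prod χ, ← addChar_map_sum]
    have : (∏ i, ((ζ i : k))) = (a : k) := by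
      rw [← hζ.2]; push_cast; rfl
    rw [this]
  calc ∑ a : kˣ, χ (a : k) * kloosterman (⇑ψ) n a
      = ∑ a : kˣ, ∑ ζ ∈ Finset.univ.filter (fun ζ : Fin n → kˣ => (∏ i, ζ i) = a),
          ∏ i, (χ ((ζ i : k)) * ψ ((ζ i : k))) := Finset.sum_congr rfl fun a _ => h1 a
    _ = ∑ ζ : Fin n → kˣ, ∏ i, (χ ((ζ i : k)) * ψ ((ζ i : k))) :=
        by apply Finset.sum_fiberwise
    _ = (∑ u : kˣ, χ (u : k) * ψ (u : k)) ^ n := (Fintype.sum_pow (fun u : kˣ => χ (u : k) * ψ (u : k)) n).symm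

/-- The sum over units equals the Gauss sum, for a nontrivial `χ`. -/
private lemma sum_units_eq_gaussSum {k : Type*} [Field k] [Fintype k] [DecidableEq k]
    (ψ : AddChar k ℂ) (χ : MulChar k ℂ) :
    ∑ u : kˣ, χ (u : k) * ψ (u : k) = gaussSum χ ψ := by
  calc ∑ u : kˣ, χ (u : k) * ψ (u : k)
      = ∑ x : {x : k // x ≠ 0}, χ (x : k) * ψ (x : k) :=
        Fintype.sum_equiv unitsEquivNeZero _ _ (fun u => rfl)
    _ = ∑ x ∈ Finset.univ.filter (fun x : k => x ≠ 0), χ x * ψ x :=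
        by symm; apply Finset.sum_subtype; intro x; simp
    _ = ∑ x : k, χ x * ψ x := by
        apply Finset.sum_filter_of_ne
        intro x _ hx
        rintro rfl
        exact hx (by simp [MulChar.map_nonunit χ not_isUnit_zero])
    _ = gaussSum χ ψ := rfl

/-- for any `a' ≠ 1` in `k^×` there is `a` with
`K_{n,a}(ψ) ≠ K_{n,a·a'}(ψ)`. -/
theorem exists_kloosterman_ne
    {k : Type*} [Field k] [Fintype k] [DecidableEq k]
    (ψ : AddChar k ℂ) (hψ : ψ ≠ 1) (n : ℕ) (hn : 1 ≤ n)
    (a' : kˣ) (ha' : a' ≠ 1) :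
    ∃ a : kˣ, kloosterman (⇑ψ) n a ≠ kloosterman (⇑ψ) n (a * a') := by
  by_contra hcon
  push_neg at hcon
  -- get a multiplicative character with χ a' ≠ 1
  have ha'k : (a' : k) ≠ 1 := fun h => ha' (Units.ext (by simpa using h))
  obtain ⟨χ, hχa⟩ := MulChar.exists_apply_ne_one_of_hasEnoughRootsOfUnity k ℂ ha'k
  have hχ1 : χ ≠ 1 := by
    rintro rfl
    exact hχa (by simp [MulChar.one_apply_coe a'])
  -- the sum S
  set S : ℂ := ∑ a : kˣ, χ (a : k) * kloosterman (⇑ψ) n a with hS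
  -- S = χ a' * S via reindexing and the hypothesis
  have hSa : S = χ (a' : k) * S := by
    rw [hS, Finset.mul_sum]
    rw [← Equiv.sum_comp (Equiv.mulRight a') (fun a => χ (a : k) * kloosterman (⇑ψ) n a)]
    apply Finset.sum_congr rfl
    intro a _
    simp only [Equiv.coe_mulRight]
    rw [← hcon a, Units.val_mul, map_mul]
    ring
  -- but S = gaussSum χ ψ ^ n ≠ 0
  have hgauss : S = gaussSum χ ψ ^ n := by
    rw [hS, sum_mulChar_kloosterman, sum_units_eq_gaussSum]
  have hprim : ψ.IsPrimitive := AddChar.IsPrimitive.of_ne_one hψ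
  have hcard : (Fintype.card k : ℂ) ≠ 0 := by
    exact_mod_cast Fintype.card_ne_zero
  have hSne : S ≠ 0 := by
    rw [hgauss]
    exact pow_ne_zero n (gaussSum_ne_zero_of_nontrivial hcard hχ1 hprim)
  have h0 : (χ (a' : k) - 1) * S = 0 := by linear_combination -hSa
  rcases mul_eq_zero.mp h0 with h | h
  · exact hχa (sub_eq_zero.mp h)
  · exact hSne h
end

section
/- Let k ⊂ k_r be a degree-r extension of finite fields with |k| = q, let s be an integer with 1 ≤ s ≤ r-1 and gcd(s, r) = 1, and let m ≥ 1 with n = mr. If d ∈ k_r^× and λ ∈ k^× satisfy d^{q^s - 1} = λ^m, then λ^{n_q} = 1 where n_q = gcd(n, q-1). -/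
private lemma geom_sum_nat (q : ℕ) (hq : 1 ≤ q) (t : ℕ) :
    (q - 1) * (∑ i ∈ Finset.range t, q ^ i) = q ^ t - 1 := by
  have h1 : 1 ≤ q ^ t := Nat.one_le_pow _ _ hq
  have := geom_sum_mul (q : ℤ) t
  have : ((q : ℤ) - 1) * (∑ i ∈ Finset.range t, (q : ℤ) ^ i) = (q : ℤ) ^ t - 1 := by
    rw [mul_comm]; exact geom_sum_mul (q : ℤ) t
  have h2 : ((q - 1 : ℕ) : ℤ) * ((∑ i ∈ Finset.range t, q ^ i : ℕ) : ℤ)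
      = ((q ^ t - 1 : ℕ) : ℤ) := by
    push_cast [Nat.cast_sub hq, Nat.cast_sub h1]
    exact this
  exact_mod_cast h2

/-- for a degree-`r` extension `kᵣ/k` of finite fields with
`|k| = q`, `1 ≤ s ≤ r-1`, `gcd(s,r) = 1`, `n = m r`: if `d ∈ kᵣ^×` and
`l ∈ k^×` satisfy `d^(q^s - 1) = l^m`, then `l^(gcd(n, q-1)) = 1`. -/
theorem pow_gcd_eq_one_of_pow_eq
    {k kr : Type*} [Field k] [Fintype k] [Field kr] [Fintype kr] [Algebra k kr]
    (q r : ℕ) (hq : Fintype.card k = q) (hr : Module.finrank k kr = r)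
    (s : ℕ) (hs1 : 1 ≤ s) (hs2 : s ≤ r - 1) (hsr : Nat.gcd s r = 1)
    (m n : ℕ) (hm : 1 ≤ m) (hn : n = m * r)
    (d : krˣ) (l : kˣ)
    (h : d ^ (q ^ s - 1) = (Units.map (algebraMap k kr).toMonoidHom l) ^ m) :
    l ^ Nat.gcd n (q - 1) = 1 := by
  classical
  have hq1 : 1 ≤ q := hq ▸ Fintype.card_pos
  set N := ∑ i ∈ Finset.range r, q ^ i with hN
  set T := ∑ i ∈ Finset.range s, q ^ i with hT
  have hgr : (q - 1) * N = q ^ r - 1 := geom_sum_nat q hq1 r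
  have hgs : (q - 1) * T = q ^ s - 1 := geom_sum_nat q hq1 s
  -- card of kr
  have hcard : Fintype.card kr = q ^ r := by
    rw [← hq, ← hr]; exact Module.card_eq_pow_finrank
  have hd : d ^ (q ^ r - 1) = 1 := by
    have := pow_card_eq_one (G := krˣ) (x := d)
    rwa [Fintype.card_units, hcard] at this
  set l' := Units.map (algebraMap k kr).toMonoidHom l with hl'
  have hexp : (q ^ s - 1) * N = (q ^ r - 1) * T := by
    rw [← hgs, ← hgr]; ring
  have key : l' ^ (m * N) = 1 := by
    calc l' ^ (m * N) = (l' ^ m) ^ N := pow_mul _ _ _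
      _ = (d ^ (q ^ s - 1)) ^ N := by rw [h]
      _ = d ^ ((q ^ s - 1) * N) := (pow_mul _ _ _).symm
      _ = (d ^ (q ^ r - 1)) ^ T := by rw [hexp, pow_mul]
      _ = 1 := by rw [hd, one_pow]
  have hinj : Function.Injective (Units.map (algebraMap k kr).toMonoidHom) :=
    Units.map_injective (algebraMap k kr).injective
  have horder : orderOf l' = orderOf l := orderOf_injective _ hinj l
  set e := orderOf l with he
  have he1 : e ∣ m * N := by
    rw [← horder]; exact orderOf_dvd_of_pow_eq_one key
  have he2 : e ∣ q - 1 := by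
    have := orderOf_dvd_card (x := l)
    rwa [Fintype.card_units, hq] at this
  haveI : NeZero e := ⟨(orderOf_pos l).ne'⟩
  -- q ≡ 1 mod e
  have hqe : (q : ZMod e) = 1 := by
    have h0 : ((q - 1 : ℕ) : ZMod e) = 0 := (ZMod.natCast_eq_zero_iff _ _).mpr he2
    rw [Nat.cast_sub hq1] at h0
    linear_combination h0
  have hNe : (N : ZMod e) = (r : ZMod e) := by
    rw [hN]; push_cast
    simp [hqe]
  have hmr : e ∣ m * r := by
    have h0 : ((m * N : ℕ) : ZMod e) = 0 := (ZMod.natCast_eq_zero_iff _ _).mpr he1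
    have h1 : ((m * r : ℕ) : ZMod e) = 0 := by push_cast at h0 ⊢; rw [← hNe]; exact h0
    exact (ZMod.natCast_eq_zero_iff _ _).mp h1
  exact orderOf_dvd_iff_pow_eq_one.mp (Nat.dvd_gcd (hn ▸ hmr) he2)
end
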